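/- Let X be a Banach space, K : X → X a bounded linear operator such that I − K is invertible with ‖(I−K)⁻¹‖ ≤ Z, and A : X → X a bounded linear operator with ‖A‖ ≤ θ, where Zθ < 1/2. Let u* solve (I−K)u* = b and let u solve (I−K)u = b + A(u). Then ‖u − u*‖ ≤ 2Z²θ‖b‖. -/
import Mathlib


/-- Abstract stability estimate (8.9) of Lemma 3.4: if `I - K` has bounded
inverse of norm `≤ Z`, `‖A‖ ≤ θ` with `Zθ < 1/2`, `u*` solves `(I-K)u* = b`
and `u` solves `(I-K)u = b + A u`, then `‖u - u*‖ ≤ 2 Z² θ ‖b‖`. -/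
theorem stmt_1 {X : Type*} [NormedAddCommGroup X] [NormedSpace ℂ X] [CompleteSpace X]
    (K A Tinv : X →L[ℂ] X)
    (hTl : Tinv.comp (ContinuousLinearMap.id ℂ X - K) = ContinuousLinearMap.id ℂ X)
    (hTr : (ContinuousLinearMap.id ℂ X - K).comp Tinv = ContinuousLinearMap.id ℂ X)
    (Z θ : ℝ) (hZ : ‖Tinv‖ ≤ Z) (hθ : ‖A‖ ≤ θ) (hZθ : Z * θ < 1 / 2)
    (b uStar u : X)
    (huStar : uStar - K uStar = b)
    (hu : u - K u = b + A u) :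
    ‖u - uStar‖ ≤ 2 * Z ^ 2 * θ * ‖b‖ := by
  have hZ0 : 0 ≤ Z := le_trans (norm_nonneg _) hZ
  have hθ0 : 0 ≤ θ := le_trans (norm_nonneg _) hθ
  have key : ∀ x : X, Tinv (x - K x) = x := by
    intro x
    have := congrArg (fun T : X →L[ℂ] X => T x) hTl
    simpa using this
  -- u = Tinv (b + A u)
  have hu1 : u = Tinv (b + A u) := by rw [← hu, key]
  have hAu : ‖A u‖ ≤ θ * ‖u‖ :=
    le_trans (A.le_opNorm u) (mul_le_mul_of_nonneg_right hθ (norm_nonneg u))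
  have hub : ‖u‖ ≤ Z * ‖b‖ + Z * θ * ‖u‖ := by
    calc ‖u‖ = ‖Tinv (b + A u)‖ := by rw [← hu1]
    _ ≤ ‖Tinv‖ * ‖b + A u‖ := Tinv.le_opNorm _
    _ ≤ Z * (‖b‖ + ‖A u‖) :=
        mul_le_mul hZ (norm_add_le _ _) (norm_nonneg _) hZ0
    _ ≤ Z * (‖b‖ + θ * ‖u‖) := by
        have := add_le_add_left hAu ‖b‖
        nlinarith
    _ = Z * ‖b‖ + Z * θ * ‖u‖ := by ring
  have hu2 : ‖u‖ ≤ 2 * Z * ‖b‖ := by nlinarith [norm_nonneg u]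
  -- u - uStar = Tinv (A u)
  have hdiff : u - uStar = Tinv (A u) := by
    have h1 : (u - uStar) - K (u - uStar) = A u := by
      rw [map_sub]
      have : (u - uStar) - (K u - K uStar) = (u - K u) - (uStar - K uStar) := by
        abel
      rw [this, hu, huStar]; abel
    rw [← h1, key]
  calc ‖u - uStar‖ = ‖Tinv (A u)‖ := by rw [hdiff]
  _ ≤ ‖Tinv‖ * ‖A u‖ := Tinv.le_opNorm _
  _ ≤ Z * (θ * ‖u‖) := mul_le_mul hZ hAu (norm_nonneg _) hZ0
  _ ≤ Z * (θ * (2 * Z * ‖b‖)) := by gcongr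
  _ = 2 * Z ^ 2 * θ * ‖b‖ := by ring
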